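/- Let α ∈ ℝ and let v_-, v_+ be periodic stationary solutions with constant α such that v_-(x) < v_+(x) for all x ∈ ℝ, and assume the Oleinik condition: every periodic stationary solution w with constant α satisfying v_-(x) ≤ w(x) ≤ v_+(x) for all x equals v_- identically or v_+ identically. Let u₀ ∈ ℝ with v_-(0) < u₀ < v_+(0), and let u : ℝ → ℝ be the global solution of u'(x) = A(x,u(x)) − α with u(0) = u₀. Then either (u(x) − v_-(x) → 0 as x → −∞ and u(x) − v_+(x) → 0 as x → +∞) or (u(x) − v_+(x) → 0 as x → −∞ and u(x) − v_-(x) → 0 as x → +∞). -/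

import Mathlib

open MeasureTheory Filter Set Topology

/-- A periodic stationary solution of the viscous conservation law, with
constant `α`. -/
def PerStat (A : ℝ → ℝ → ℝ) (α : ℝ) (v : ℝ → ℝ) : Prop :=
  ContDiff ℝ 1 v ∧ (∀ x, v (x + 1) = v x) ∧ ∀ x, deriv v x = A x (v x) - α

lemma perInt {f : ℝ → ℝ} (h : ∀ x, f (x + 1) = f x) : ∀ (k : ℤ) (x : ℝ), f (x + k) = f x := by
  intro k
  induction k using Int.induction_on with
  | zero => simp
  | succ n ih =>
    intro x
    have h1 : ((n:ℤ)+1 : ℤ) = ((n+1 : ℕ) : ℤ) := by push_cast; ring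
    have : x + ((n:ℤ)+1 : ℤ) = (x + (n:ℤ)) + 1 := by push_cast; ring
    rw [this, h, ih]
  | pred n ih =>
    intro x
    have h2 := ih (x - 1)
    have e1 : x - 1 + ((-n : ℤ) : ℝ) = x + ((-(n:ℤ) - 1 : ℤ) : ℝ) := by push_cast; ring
    have e2 : x = (x - 1) + 1 := by ring
    calc f (x + ((-(n:ℤ) - 1 : ℤ) : ℝ)) = f (x - 1 + ((-n : ℤ) : ℝ)) := by rw [e1]
    _ = f (x - 1) := h2
    _ = f (x - 1 + 1) := (h _).symm
    _ = f x := by norm_num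

lemma perNat {f : ℝ → ℝ} (h : ∀ x, f (x + 1) = f x) (n : ℕ) (x : ℝ) : f (x + n) = f x := by
  simpa using perInt h n x

lemma per_fract {f : ℝ → ℝ} (h : ∀ x, f (x + 1) = f x) (x : ℝ) : f x = f (Int.fract x) := by
  conv_lhs => rw [← Int.fract_add_floor x]
  exact perInt h ⌊x⌋ (Int.fract x)

lemma per_bound {f : ℝ → ℝ} (hc : Continuous f) (h : ∀ x, f (x + 1) = f x) :
    ∃ C, ∀ x, |f x| ≤ C := by
  obtain ⟨C, hC⟩ := (isCompact_Icc (a := (0:ℝ)) (b := 1)).exists_bound_of_continuousOn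
    hc.continuousOn
  refine ⟨C, fun x => ?_⟩
  rw [per_fract h x]
  exact hC _ ⟨Int.fract_nonneg x, (Int.fract_lt_one x).le⟩

lemma lipschitz_strip {A : ℝ → ℝ → ℝ} (hA : ContDiff ℝ 1 (Function.uncurry A))
    (hper : ∀ y v, A (y + 1) v = A y v) (α c d : ℝ) :
    ∃ K : NNReal, ∀ t : ℝ, LipschitzOnWith K (fun y => A t y - α) (Icc c d) := by
  set D : ℝ × ℝ → ℝ := fun p => fderiv ℝ (Function.uncurry A) p (0, 1) with hDdef
  have hDc : Continuous D := (hA.continuous_fderiv one_ne_zero).clm_apply continuous_const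
  obtain ⟨K₀, hK₀⟩ := ((isCompact_Icc (a := (0:ℝ)) (b := 1)).prod
    (isCompact_Icc (a := c) (b := d))).exists_bound_of_continuousOn hDc.continuousOn
  refine ⟨K₀.toNNReal, fun t => ?_⟩
  -- derivative of y ↦ A s y is D (s, y)
  have hder : ∀ s y : ℝ, HasDerivAt (fun y => A s y - α) (D (s, y)) y := by
    intro s y
    have hc : HasDerivAt (fun y : ℝ => ((s, y) : ℝ × ℝ)) (0, 1) y :=
      (hasDerivAt_const y s).prodMk (hasDerivAt_id y)
    have hφ := (hA.differentiable one_ne_zero (s, y)).hasFDerivAt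
    exact (hφ.comp_hasDerivAt y hc).sub_const α
  -- reduce t to fract t
  have hred : (fun y => A t y - α) = fun y => A (Int.fract t) y - α := by
    funext y
    rw [per_fract (f := fun x => A x y) (fun x => hper x y) t]
  rw [hred]
  apply (convex_Icc c d).lipschitzOnWith_of_nnnorm_hasDerivWithin_le
    (f' := fun y => D (Int.fract t, y))
    (fun y _ => (hder (Int.fract t) y).hasDerivWithinAt)
  intro y hy
  have hmem : (Int.fract t, y) ∈ Icc (0:ℝ) 1 ×ˢ Icc c d :=
    ⟨⟨Int.fract_nonneg t, (Int.fract_lt_one t).le⟩, hy⟩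
  have h1 := hK₀ _ hmem
  have h2 : ‖D (Int.fract t, y)‖ ≤ (K₀.toNNReal : ℝ) := h1.trans (Real.le_coe_toNNReal K₀)
  exact_mod_cast h2

lemma ode_uniq {A : ℝ → ℝ → ℝ} (hA : ContDiff ℝ 1 (Function.uncurry A))
    (hper : ∀ y v, A (y + 1) v = A y v) {α : ℝ} {f g : ℝ → ℝ}
    (hf : ∀ x, HasDerivAt f (A x (f x) - α) x)
    (hg : ∀ x, HasDerivAt g (A x (g x) - α) x)
    {x₁ : ℝ} (heq : f x₁ = g x₁) : f = g := by
  have hfc : Continuous f := continuous_iff_continuousAt.mpr fun x => (hf x).continuousAt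
  have hgc : Continuous g := continuous_iff_continuousAt.mpr fun x => (hg x).continuousAt
  funext x
  -- work on a compact interval containing x₁ and x
  set a : ℝ := min x₁ x - 1 with ha
  set b : ℝ := max x₁ x + 1 with hb
  have hx₁ : x₁ ∈ Ioo a b := ⟨by simp [ha]; nlinarith [min_le_left x₁ x, le_max_left x₁ x],
    by nlinarith [min_le_left x₁ x, le_max_left x₁ x]⟩
  have hx : x ∈ Icc a b := ⟨by nlinarith [min_le_right x₁ x], by nlinarith [le_max_right x₁ x]⟩
  obtain ⟨C₁, hC₁⟩ := isCompact_Icc.exists_bound_of_continuousOn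
    (hfc.continuousOn : ContinuousOn f (Icc a b))
  obtain ⟨C₂, hC₂⟩ := isCompact_Icc.exists_bound_of_continuousOn
    (hgc.continuousOn : ContinuousOn g (Icc a b))
  set C : ℝ := max C₁ C₂ with hC
  obtain ⟨K, hK⟩ := lipschitz_strip hA hper α (-C) C
  have key := ODE_solution_unique_of_mem_Icc (v := fun t y => A t y - α)
    (s := fun _ => Icc (-C) C) (K := K) (fun t _ => hK t) hx₁
    hfc.continuousOn (fun t _ => hf t)
    (fun t ht => ?_) hgc.continuousOn (fun t _ => hg t) (fun t ht => ?_) heq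
  · exact key hx
  · have := hC₁ t (Ioo_subset_Icc_self ht)
    rw [Real.norm_eq_abs, abs_le] at this
    exact ⟨by linarith [le_max_left C₁ C₂], by linarith [le_max_left C₁ C₂]⟩
  · have := hC₂ t (Ioo_subset_Icc_self ht)
    rw [Real.norm_eq_abs, abs_le] at this
    exact ⟨by linarith [le_max_right C₁ C₂], by linarith [le_max_right C₁ C₂]⟩

lemma PerStat.hasDerivAt' {A : ℝ → ℝ → ℝ} {α : ℝ} {v : ℝ → ℝ} (hv : PerStat A α v) (x : ℝ) :
    HasDerivAt v (A x (v x) - α) x := by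
  have h := (hv.1.differentiable one_ne_zero x).hasDerivAt
  rwa [hv.2.2 x] at h

lemma comp_lt {A : ℝ → ℝ → ℝ} (hA : ContDiff ℝ 1 (Function.uncurry A))
    (hper : ∀ y v, A (y + 1) v = A y v) {α : ℝ} {f g : ℝ → ℝ}
    (hf : ∀ x, HasDerivAt f (A x (f x) - α) x)
    (hg : ∀ x, HasDerivAt g (A x (g x) - α) x)
    (h0 : f 0 < g 0) : ∀ x, f x < g x := by
  have hne : ∀ x, f x ≠ g x := by
    intro x hx
    rw [ode_uniq hA hper hf hg hx] at h0
    exact lt_irrefl _ h0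
  intro x
  by_contra hle
  push_neg at hle
  have hlt : g x < f x := lt_of_le_of_ne hle fun h => hne x h.symm
  set d : ℝ → ℝ := fun y => g y - f y with hd
  have hdc : Continuous d := (continuous_iff_continuousAt.mpr fun y => (hg y).continuousAt).sub
    (continuous_iff_continuousAt.mpr fun y => (hf y).continuousAt)
  have h0' : (0:ℝ) ∈ uIcc (d x) (d 0) := by
    rw [mem_uIcc]
    left
    constructor <;> simp [hd] <;> linarith
  obtain ⟨c, _, hc⟩ := intermediate_value_uIcc hdc.continuousOn h0'
  exact hne c (by simp [hd] at hc; linarith)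

lemma sol_shift {A : ℝ → ℝ → ℝ} {α : ℝ} {u : ℝ → ℝ} {c : ℝ}
    (hAc : ∀ y v, A (y + c) v = A y v)
    (hu : ∀ x, HasDerivAt u (A x (u x) - α) x) (x : ℝ) :
    HasDerivAt (fun x => u (x + c)) (A x (u (x + c)) - α) x := by
  have h := HasDerivAt.comp x (hu (x + c)) ((hasDerivAt_id x).add_const c)
  simpa [hAc, Function.comp_def] using h

structure Pack (A : ℝ → ℝ → ℝ) (α : ℝ) (vm vp u : ℝ → ℝ) : Prop where
  hA : ContDiff ℝ 1 (Function.uncurry A)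
  hper : ∀ y v, A (y + 1) v = A y v
  hvm : PerStat A α vm
  hvp : PerStat A α vp
  hlt : ∀ x, vm x < vp x
  holeinik : ∀ w : ℝ → ℝ, PerStat A α w → (∀ x, vm x ≤ w x ∧ w x ≤ vp x) → w = vm ∨ w = vp
  h0l : vm 0 < u 0
  h0r : u 0 < vp 0
  hu : ∀ x, HasDerivAt u (A x (u x) - α) x

lemma PerStat.reflect {A : ℝ → ℝ → ℝ} {α : ℝ} {v : ℝ → ℝ} (hv : PerStat A α v) :
    PerStat (fun y w => -A (-y) w) (-α) (fun x => v (-x)) := by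
  refine ⟨hv.1.comp (contDiff_id (𝕜 := ℝ) (E := ℝ)).neg, ?_, ?_⟩
  · intro x
    have := hv.2.1 (-x - 1)
    show v (-(x+1)) = v (-x)
    rw [show -(x+1) = -x - 1 by ring, ← this]
    norm_num
  · intro x
    have h1 : HasDerivAt (fun x => v (-x)) (-(A (-x) (v (-x)) - α)) x := by
      have := HasDerivAt.comp x (hv.hasDerivAt' (-x)) (hasDerivAt_neg x)
      simpa [mul_comm, Function.comp_def] using this
    rw [h1.deriv]; ring

lemma PerStat.flipv {A : ℝ → ℝ → ℝ} {α : ℝ} {v : ℝ → ℝ} (hv : PerStat A α v) :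
    PerStat (fun y w => -A y (-w)) (-α) (fun x => -v x) := by
  refine ⟨hv.1.neg, fun x => by simp [hv.2.1 x], ?_⟩
  intro x
  have h1 : HasDerivAt (fun x => -v x) (-(A x (v x) - α)) x := (hv.hasDerivAt' x).neg
  rw [h1.deriv]; ring_nf

lemma Pack.reflect {A : ℝ → ℝ → ℝ} {α : ℝ} {vm vp u : ℝ → ℝ} (P : Pack A α vm vp u) :
    Pack (fun y w => -A (-y) w) (-α) (fun x => vm (-x)) (fun x => vp (-x)) (fun x => u (-x)) := by
  constructor
  · have : (Function.uncurry fun y w => -A (-y) w)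
        = (fun q => -(Function.uncurry A) q) ∘ (fun p : ℝ × ℝ => (-p.1, p.2)) := rfl
    rw [this]
    exact (P.hA.neg).comp ((contDiff_fst.neg).prodMk contDiff_snd)
  · intro y v
    have := P.hper (-y - 1) v
    show -A (-(y+1)) v = -A (-y) v
    rw [show -(y+1) = -y - 1 by ring, ← this]
    norm_num
  · exact P.hvm.reflect
  · exact P.hvp.reflect
  · exact fun x => P.hlt (-x)
  · intro w hw hb
    have hw' : PerStat A α (fun x => w (-x)) := by
      have := hw.reflect
      simpa [neg_neg] using this
    rcases P.holeinik _ hw' (fun x => by simpa using hb (-x)) with h | h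
    · left; funext x; have := congrFun h (-x); simpa using this
    · right; funext x; have := congrFun h (-x); simpa using this
  · simpa using P.h0l
  · simpa using P.h0r
  · intro x
    have h2 := HasDerivAt.comp x (P.hu (-x)) (hasDerivAt_neg x)
    have h3 : HasDerivAt (fun x => u (-x)) (-(A (-x) (u (-x)) - α)) x := by
      simpa [mul_comm, Function.comp_def] using h2
    convert h3 using 1; ring

lemma Pack.flipv {A : ℝ → ℝ → ℝ} {α : ℝ} {vm vp u : ℝ → ℝ} (P : Pack A α vm vp u) :
    Pack (fun y w => -A y (-w)) (-α) (fun x => -vp x) (fun x => -vm x) (fun x => -u x) := by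
  constructor
  · have : (Function.uncurry fun y w => -A y (-w))
        = (fun q => -(Function.uncurry A) q) ∘ (fun p : ℝ × ℝ => (p.1, -p.2)) := rfl
    rw [this]
    exact (P.hA.neg).comp (contDiff_fst.prodMk contDiff_snd.neg)
  · intro y v; simp [P.hper]
  · exact P.hvp.flipv
  · exact P.hvm.flipv
  · exact fun x => by have := P.hlt x; linarith
  · intro w hw hb
    have hw' : PerStat A α (fun x => -w x) := by
      have := hw.flipv
      simpa [neg_neg] using this
    rcases P.holeinik _ hw' (fun x => by have := hb x; constructor <;> linarith) with h | h
    · right; funext x; have := congrFun h x; linarith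
    · left; funext x; have := congrFun h x; linarith
  · simpa using P.h0r
  · simpa using P.h0l
  · intro x
    have h2 := (P.hu x).neg
    show HasDerivAt (-u) _ x; exact h2.congr_deriv (by simp only [neg_neg]; ring)

lemma halfTop {A : ℝ → ℝ → ℝ} {α : ℝ} {vm vp u : ℝ → ℝ} (P : Pack A α vm vp u)
    (hmono : ∀ x, u x < u (x + 1)) :
    Tendsto (fun x => u x - vp x) atTop (𝓝 0) := by
  obtain ⟨hA, hper, hvm, hvp, hlt, hol, h0l, h0r, hu⟩ := P
  have hAc : Continuous (Function.uncurry A) := hA.continuous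
  have huc : Continuous u := continuous_iff_continuousAt.mpr fun x => (hu x).continuousAt
  have hvmc : Continuous vm := hvm.1.continuous
  have hvpc : Continuous vp := hvp.1.continuous
  have hvmd := hvm.hasDerivAt'
  have hvpd := hvp.hasDerivAt'
  have trapm : ∀ x, vm x < u x := comp_lt hA hper hvmd hu h0l
  have trapp : ∀ x, u x < vp x := comp_lt hA hper hu hvpd h0r
  obtain ⟨Cm, hCm⟩ := per_bound hvmc hvm.2.1
  obtain ⟨Cp, hCp⟩ := per_bound hvpc hvp.2.1
  set m : ℝ := -Cm with hmdef
  set M : ℝ := Cp with hMdef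
  have hmle : ∀ x, m ≤ vm x := fun x => (abs_le.mp (hCm x)).1
  have hMle : ∀ x, vp x ≤ M := fun x => (abs_le.mp (hCp x)).2
  have hum : ∀ x, m ≤ u x := fun x => (hmle x).trans (trapm x).le
  have huM : ∀ x, u x ≤ M := fun x => (trapp x).le.trans (hMle x)
  have hvpm : ∀ x, m ≤ vp x := fun x => (hmle x).trans (hlt x).le
  have hvmM : ∀ x, vm x ≤ M := fun x => (hlt x).le.trans (hMle x)
  -- the monotone sequence of shifts
  have hseq : ∀ x : ℝ, Monotone fun n : ℕ => u (x + n) := by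
    intro x
    apply monotone_nat_of_le_succ
    intro n
    have h1 := (hmono (x + n)).le
    have e : x + ((n:ℝ) + 1) = x + n + 1 := by ring
    push_cast
    rw [e]
    exact h1
  have hbdd : ∀ x : ℝ, BddAbove (range fun n : ℕ => u (x + n)) := by
    intro x
    refine ⟨M, ?_⟩
    rintro _ ⟨n, rfl⟩
    exact huM _
  set w : ℝ → ℝ := fun x => ⨆ n : ℕ, u (x + n) with hwdef
  have hwlim : ∀ x, Tendsto (fun n : ℕ => u (x + n)) atTop (𝓝 (w x)) := fun x =>
    tendsto_atTop_ciSup (hseq x) (hbdd x)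
  have hwper : ∀ x, w (x + 1) = w x := by
    intro x
    have l1 : Tendsto (fun n : ℕ => u (x + 1 + n)) atTop (𝓝 (w (x + 1))) := hwlim (x + 1)
    have l2 : Tendsto (fun n : ℕ => u (x + 1 + n)) atTop (𝓝 (w x)) := by
      have h2 := (hwlim x).comp (tendsto_add_atTop_nat 1)
      convert h2 using 2 with n
      simp only [Function.comp]
      push_cast
      ring_nf
    exact tendsto_nhds_unique l1 l2
  have hwlb : ∀ x, vm x ≤ w x := by
    intro x
    refine ge_of_tendsto' (hwlim x) fun n => ?_
    rw [← perNat hvm.2.1 n x]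
    exact (trapm _).le
  have hwub : ∀ x, w x ≤ vp x := by
    intro x
    refine le_of_tendsto' (hwlim x) fun n => ?_
    rw [← perNat hvp.2.1 n x]
    exact (trapp _).le
  have hwm : ∀ x, m ≤ w x := fun x => (hmle x).trans (hwlb x)
  have hwM : ∀ x, w x ≤ M := fun x => (hwub x).trans (hMle x)
  have hwmeas : Measurable w := by
    apply measurable_of_tendsto_metrizable
      (f := fun (n : ℕ) (x : ℝ) => u (x + n))
      (fun n => (huc.comp (continuous_id.add continuous_const)).measurable)
    exact tendsto_pi_nhds.mpr hwlim
  -- shifted solutions and their integral identity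
  have hshift : ∀ (n : ℕ) (x : ℝ),
      HasDerivAt (fun s => u (s + (n : ℝ))) (A x (u (x + n)) - α) x := fun n =>
    sol_shift (fun y v => perNat (f := fun z => A z v) (fun z => hper z v) n y) hu
  have hint : ∀ (n : ℕ) (a b : ℝ), u (b + n) - u (a + n) = ∫ s in a..b, (A s (u (s + n)) - α) := by
    intro n a b
    have hcont : Continuous fun s => A s (u (s + (n:ℝ))) - α :=
      (hAc.comp (continuous_id.prodMk (huc.comp (continuous_id.add continuous_const)))).sub
        continuous_const
    exact (intervalIntegral.integral_eq_sub_of_hasDerivAt (fun s _ => hshift n s)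
      (hcont.intervalIntegrable a b)).symm
  -- the limit function satisfies the integral identity
  have hwint : ∀ a b : ℝ, w b - w a = ∫ s in a..b, (A s (w s) - α) := by
    intro a b
    obtain ⟨C₀, hC₀⟩ := (isCompact_uIcc.prod (isCompact_Icc (a := m) (b := M)))
      |>.exists_bound_of_continuousOn hAc.continuousOn
    set C : ℝ := |C₀| + |α| with hCdef
    have hbound : ∀ (y : ℝ) (s : ℝ), s ∈ Set.uIoc a b → y ∈ Icc m M → ‖A s y - α‖ ≤ C := by
      intro y s hs hy
      have h1 : ‖Function.uncurry A (s, y)‖ ≤ C₀ := hC₀ (s, y) ⟨uIoc_subset_uIcc hs, hy⟩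
      have : |A s y| ≤ C₀ := h1
      calc ‖A s y - α‖ ≤ |A s y| + |α| := norm_sub_le _ _
        _ ≤ |C₀| + |α| := by have := le_abs_self C₀; linarith
    have hlhs : Tendsto (fun n : ℕ => u (b + n) - u (a + n)) atTop (𝓝 (w b - w a)) :=
      (hwlim b).sub (hwlim a)
    have hrhs : Tendsto (fun n : ℕ => ∫ s in a..b, (A s (u (s + n)) - α)) atTop
        (𝓝 (∫ s in a..b, (A s (w s) - α))) := by
      apply intervalIntegral.tendsto_integral_filter_of_dominated_convergence
        (bound := fun _ => C)
      · apply Eventually.of_forall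
        intro n
        exact ((hAc.comp (continuous_id.prodMk
          (huc.comp (continuous_id.add continuous_const)))).sub
          continuous_const).aestronglyMeasurable.restrict
      · apply Eventually.of_forall
        intro n
        apply Eventually.of_forall
        intro s hs
        exact hbound (u (s + n)) s hs ⟨hum _, huM _⟩
      · exact intervalIntegrable_const
      · apply Eventually.of_forall
        intro s hs
        have hcont : Continuous fun y => A s y - α :=
          (hAc.comp (continuous_const.prodMk continuous_id)).sub continuous_const
        have := (hcont.tendsto (w s)).comp (hwlim s)
        simpa [Function.comp_def] using this
    have : (fun n : ℕ => u (b + n) - u (a + n))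
        = fun n : ℕ => ∫ s in a..b, (A s (u (s + n)) - α) := funext fun n => hint n a b
    rw [this] at hlhs
    exact tendsto_nhds_unique hlhs hrhs
  -- continuity of w
  have hwcont : Continuous w := by
    rw [continuous_iff_continuousAt]
    intro x₀
    obtain ⟨C₀, hC₀⟩ := ((isCompact_Icc (a := x₀ - 1) (b := x₀ + 1)).prod
      (isCompact_Icc (a := m) (b := M))).exists_bound_of_continuousOn hAc.continuousOn
    set C : ℝ := |C₀| + |α| with hCdef
    have hCnn : 0 ≤ C := by positivity
    have hlip : LipschitzOnWith C.toNNReal w (Icc (x₀ - 1) (x₀ + 1)) := by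
      apply LipschitzOnWith.of_dist_le_mul
      intro p hp q hq
      have hsub : Set.uIoc q p ⊆ Icc (x₀ - 1) (x₀ + 1) :=
        uIoc_subset_uIcc.trans (uIcc_subset_Icc hq hp)
      have hb : ∀ s ∈ Set.uIoc q p, ‖A s (w s) - α‖ ≤ C := by
        intro s hs
        have h1 : ‖Function.uncurry A (s, w s)‖ ≤ C₀ := hC₀ (s, w s) ⟨hsub hs, ⟨hwm s, hwM s⟩⟩
        have h2 : |A s (w s)| ≤ C₀ := h1
        calc ‖A s (w s) - α‖ ≤ |A s (w s)| + |α| := norm_sub_le _ _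
          _ ≤ |C₀| + |α| := by have := le_abs_self C₀; linarith
      have h3 : ‖∫ s in q..p, (A s (w s) - α)‖ ≤ C * |p - q| :=
        intervalIntegral.norm_integral_le_of_norm_le_const hb
      rw [Real.dist_eq, Real.dist_eq, ← hwint q p] at *
      calc |w p - w q| ≤ C * |p - q| := h3
        _ = (C.toNNReal : ℝ) * |p - q| := by rw [Real.coe_toNNReal C hCnn]
    exact hlip.continuousOn.continuousAt (Icc_mem_nhds (by linarith) (by linarith))
  -- w is a C¹ solution
  set g : ℝ → ℝ := fun s => A s (w s) - α with hgdef
  have hgc : Continuous g := (hAc.comp (continuous_id.prodMk hwcont)).sub continuous_const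
  have hwd : ∀ x, HasDerivAt w (g x) x := by
    intro x
    have h1 : HasDerivAt (fun b => w 0 + ∫ s in (0:ℝ)..b, g s) (g x) x := by
      apply HasDerivAt.const_add
      exact intervalIntegral.integral_hasDerivAt_right (hgc.intervalIntegrable 0 x)
        (hgc.stronglyMeasurableAtFilter volume (𝓝 x)) hgc.continuousAt
    have h2 : w = fun b => w 0 + ∫ s in (0:ℝ)..b, g s := by
      funext b
      have := hwint 0 b
      linarith
    rw [h2]
    exact h1
  have hwP : PerStat A α w := by
    refine ⟨contDiff_one_iff_deriv.mpr ⟨fun x => (hwd x).differentiableAt, ?_⟩, hwper,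
      fun x => (hwd x).deriv⟩
    have : deriv w = g := funext fun x => (hwd x).deriv
    rw [this]
    exact hgc
  -- Oleinik: w = vp
  have hwvp : w = vp := by
    rcases hol w hwP (fun x => ⟨hwlb x, hwub x⟩) with h | h
    · exfalso
      have h1 : u (0 + ((1:ℕ):ℝ)) ≤ w 0 := le_ciSup (hbdd 0) 1
      have h2 : u 0 < u (0 + 1) := hmono 0
      have h3 : vm 0 = w 0 := by rw [h]
      push_cast at h1
      have := h0l
      linarith
    · exact h
  -- Gronwall step to get uniform convergence
  obtain ⟨K, hK⟩ := lipschitz_strip hA hper α m M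
  have hd0 : Tendsto (fun n : ℕ => dist (u n) (vp 0)) atTop (𝓝 0) := by
    have h1 := (hwlim 0).dist (tendsto_const_nhds (x := vp 0))
    rw [hwvp] at h1
    simpa using h1
  have key : ∀ x : ℝ, 0 ≤ x →
      dist (u x) (vp x) ≤ dist (u (⌊x⌋₊ : ℝ)) (vp 0) * Real.exp K := by
    intro x hx
    set n : ℕ := ⌊x⌋₊ with hn
    have hn1 : (n : ℝ) ≤ x := Nat.floor_le hx
    have hn2 : x ≤ (n : ℝ) + 1 := (Nat.lt_floor_add_one x).le
    have hvpn : vp (n : ℝ) = vp 0 := by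
      have := perNat hvp.2.1 n 0
      simpa using this
    have hG := dist_le_of_trajectories_ODE_of_mem (v := fun t y => A t y - α)
      (s := fun _ => Icc m M) (K := K) (fun t _ => hK t)
      (huc.continuousOn) (fun t _ => (hu t).hasDerivWithinAt)
      (fun t _ => ⟨hum t, huM t⟩)
      (hvpc.continuousOn) (fun t _ => (hvpd t).hasDerivWithinAt)
      (fun t _ => ⟨hvpm t, hMle t⟩)
      (le_refl (dist (u (n : ℝ)) (vp (n : ℝ)))) x ⟨hn1, hn2⟩
      (a := (n : ℝ)) (b := (n : ℝ) + 1)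
    rw [hvpn] at hG
    calc dist (u x) (vp x) ≤ dist (u (n:ℝ)) (vp 0) * Real.exp (K * (x - n)) := hG
      _ ≤ dist (u (n:ℝ)) (vp 0) * Real.exp K := by
        apply mul_le_mul_of_nonneg_left _ dist_nonneg
        apply Real.exp_le_exp.mpr
        have : (K:ℝ) * (x - n) ≤ (K:ℝ) * 1 :=
          mul_le_mul_of_nonneg_left (by linarith) K.coe_nonneg
        linarith
  rw [tendsto_zero_iff_norm_tendsto_zero]
  apply squeeze_zero' (Eventually.of_forall fun x => norm_nonneg _)
    (g := fun x : ℝ => dist (u (⌊x⌋₊ : ℝ)) (vp 0) * Real.exp K)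
  · filter_upwards [eventually_ge_atTop (0:ℝ)] with x hx
    have := key x hx
    rwa [Real.dist_eq] at this
  · have h1 : Tendsto (fun x : ℝ => dist (u (⌊x⌋₊ : ℝ)) (vp 0)) atTop (𝓝 0) := by
      have := hd0.comp (tendsto_nat_floor_atTop (α := ℝ))
      simpa [Function.comp_def] using this
    have := h1.mul_const (Real.exp K)
    simpa using this

/-- under the Oleinik condition, the global solution of
`u' = A(x,u) - α`, `u(0) = u₀` connects `v₋` to `v₊`, in one direction or
the other. -/
theorem shock_ode_asymptotic_states_oleinik
    (A : ℝ → ℝ → ℝ)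
    (hA : ContDiff ℝ 1 (Function.uncurry A))
    (hper : ∀ y v, A (y + 1) v = A y v)
    (α : ℝ) (vm vp : ℝ → ℝ)
    (hvm : PerStat A α vm) (hvp : PerStat A α vp)
    (hlt : ∀ x, vm x < vp x)
    (holeinik : ∀ w : ℝ → ℝ, PerStat A α w →
      (∀ x, vm x ≤ w x ∧ w x ≤ vp x) → w = vm ∨ w = vp)
    (u₀ : ℝ) (h₀l : vm 0 < u₀) (h₀r : u₀ < vp 0)
    (u : ℝ → ℝ)
    (hu : ∀ x, HasDerivAt u (A x (u x) - α) x)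
    (hu0 : u 0 = u₀) :
    (Tendsto (fun x => u x - vm x) atBot (𝓝 0) ∧
      Tendsto (fun x => u x - vp x) atTop (𝓝 0)) ∨
    (Tendsto (fun x => u x - vp x) atBot (𝓝 0) ∧
      Tendsto (fun x => u x - vm x) atTop (𝓝 0)) := by
  rw [← hu0] at h₀l h₀r
  have P : Pack A α vm vp u := ⟨hA, hper, hvm, hvp, hlt, holeinik, h₀l, h₀r, hu⟩
  have huc : Continuous u := continuous_iff_continuousAt.mpr fun x => (hu x).continuousAt
  have hTu : ∀ x, HasDerivAt (fun x => u (x + 1)) (A x (u (x + 1)) - α) x :=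
    sol_shift hper hu
  rcases lt_trichotomy (u 0) (u 1) with hcase | hcase | hcase
  · -- increasing case
    have hmono : ∀ x, u x < u (x + 1) := by
      have h := comp_lt hA hper hu hTu (by simpa using hcase)
      simpa using h
    left
    refine ⟨?_, halfTop P hmono⟩
    -- atBot part via double reflection
    have hm2 : ∀ x, -u (-x) < -u (-(x + 1)) := by
      intro x
      have h := hmono (-(x+1))
      rw [show -(x+1) + 1 = -x by ring] at h
      linarith
    have h := halfTop P.reflect.flipv (by intro x; show -u (-x) < -u (-(x+1)); exact hm2 x)
    -- h : Tendsto (fun x => -u (-x) - -vm (-x)) atTop (𝓝 0)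
    have h2 : Tendsto (fun x : ℝ => u (-x) - vm (-x)) atTop (𝓝 0) := by
      have := h.neg
      simp only [neg_zero] at this
      convert this using 2 with x
      ring
    have h3 := h2.comp tendsto_neg_atBot_atTop
    convert h3 using 2 with x
    simp [Function.comp]
  · -- equality case: u is itself periodic, contradiction with Oleinik
    exfalso
    have hTeq : (fun x => u (x + 1)) = u :=
      ode_uniq hA hper hTu hu (x₁ := 0) (by simpa using hcase.symm)
    have hderc : Continuous (deriv u) := by
      have : deriv u = fun x => A x (u x) - α := funext fun x => (hu x).deriv
      rw [this]
      exact (hA.continuous.comp (continuous_id.prodMk huc)).sub continuous_const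
    have huP : PerStat A α u :=
      ⟨contDiff_one_iff_deriv.mpr ⟨fun x => (hu x).differentiableAt, hderc⟩,
        fun x => congrFun hTeq x, fun x => (hu x).deriv⟩
    have trapm : ∀ x, vm x < u x := comp_lt hA hper (hvm.hasDerivAt') hu h₀l
    have trapp : ∀ x, u x < vp x := comp_lt hA hper hu (hvp.hasDerivAt') h₀r
    rcases holeinik u huP (fun x => ⟨(trapm x).le, (trapp x).le⟩) with h | h
    · rw [h] at h₀l; exact lt_irrefl _ h₀l
    · rw [h] at h₀r; exact lt_irrefl _ h₀r
  · -- decreasing case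
    have hanti : ∀ x, u (x + 1) < u x := by
      have h := comp_lt hA hper hTu hu (by simpa using hcase)
      simpa using h
    right
    constructor
    · -- atBot via single reflection
      have hm : ∀ x, u (-x) < u (-(x + 1)) := by
        intro x
        have h := hanti (-(x+1))
        rw [show -(x+1) + 1 = -x by ring] at h
        linarith
      have h := halfTop P.reflect (by intro x; show u (-x) < u (-(x+1)); exact hm x)
      -- h : Tendsto (fun x => u (-x) - vp (-x)) atTop (𝓝 0)
      have h3 := h.comp tendsto_neg_atBot_atTop
      convert h3 using 2 with x
      simp [Function.comp]
    · -- atTop via value flip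
      have hm : ∀ x, -u x < -u (x + 1) := fun x => by have := hanti x; linarith
      have h := halfTop P.flipv (by intro x; show -u x < -u (x+1); exact hm x)
      -- h : Tendsto (fun x => -u x - -vm x) atTop (𝓝 0)
      have := h.neg
      simp only [neg_zero] at this
      convert this using 2 with x
      ring
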